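/- Let 0 < p ≤ 2, 0 < ρ < 1, c > 0, K > 0, and N ≥ 1. Let (ε_t)_{t≥1} be i.i.d. random vectors in ℝ^N, defined on a probability space (Ω, 𝓕, P), such that E|ε_{k,1}|^p ≤ K for every coordinate k ∈ {1, …, N}. Let (C*_m)_{m≥0} be N×N real matrices each of whose entries is bounded in absolute value by c ρ^m, and set u_t = Σ_{m=0}^{t−1} C*_m ε_{t−m}. Then there exists a constant c₀, depending only on N, p, ρ, c and K, such that for every T ≥ 1, E[ (λ_max(Σ_{t=1}^T u_t u_tᵀ))^{p/2} ] ≤ c₀ T, where λ_max denotes the largest eigenvalue of the symmetric positive semidefinite matrix Σ_{t=1}^T u_t u_tᵀ. -/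

import Mathlib

open Matrix MeasureTheory ProbabilityTheory
open scoped Classical

open scoped NNReal ENNReal

/-- The largest eigenvalue of a real square matrix (junk value `0` if the matrix is not
symmetric/Hermitian). -/
noncomputable def lambdaMax {n : ℕ} (A : Matrix (Fin n) (Fin n) ℝ) : ℝ :=
  if hA : A.IsHermitian then ⨆ i, hA.eigenvalues i else 0

section Aux

lemma myRpowSumLe {ι : Type*} (s : Finset ι) (f : ι → ℝ) (hf : ∀ i ∈ s, 0 ≤ f i)
    {q : ℝ} (hq0 : 0 < q) (hq1 : q ≤ 1) :
    (∑ i ∈ s, f i) ^ q ≤ ∑ i ∈ s, f i ^ q := by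
  classical
  induction s using Finset.cons_induction with
  | empty => simp [Real.zero_rpow hq0.ne']
  | cons a s ha ih =>
    rw [Finset.sum_cons, Finset.sum_cons]
    have hs : 0 ≤ ∑ i ∈ s, f i :=
      Finset.sum_nonneg fun i hi => hf i (Finset.mem_cons_of_mem hi)
    have hfa : 0 ≤ f a := hf a (Finset.mem_cons_self a s)
    have h2 : ∀ x y : ℝ, 0 ≤ x → 0 ≤ y → (x + y) ^ q ≤ x ^ q + y ^ q := by
      intro x y hx hy
      lift x to ℝ≥0 using hx
      lift y to ℝ≥0 using hy
      rw [← NNReal.coe_add, ← NNReal.coe_rpow, ← NNReal.coe_rpow, ← NNReal.coe_rpow,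
        ← NNReal.coe_add, NNReal.coe_le_coe]
      exact NNReal.rpow_add_le_add_rpow x y hq0.le hq1
    have h2 := h2 (f a) (∑ i ∈ s, f i) hfa hs
    exact h2.trans (by
      gcongr
      exact ih fun i hi => hf i (Finset.mem_cons_of_mem hi))

lemma myTraceEq {n : ℕ} (A : Matrix (Fin n) (Fin n) ℝ) (hA : A.IsHermitian) :
    A.trace = ∑ i, hA.eigenvalues i := by
  simpa using hA.trace_eq_sum_eigenvalues

lemma myVecMulVecPSD {n : ℕ} (v : Fin n → ℝ) : (Matrix.vecMulVec v v).PosSemidef := by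
  have h : Matrix.vecMulVec v v = (Matrix.replicateRow Unit v)ᴴ * Matrix.replicateRow Unit v := by
    rw [Matrix.vecMulVec_eq Unit, Matrix.conjTranspose_replicateRow]
    simp
  rw [h]
  exact Matrix.posSemidef_conjTranspose_mul_self _

lemma myLambdaBounds {n : ℕ} (hn : 0 < n) {A : Matrix (Fin n) (Fin n) ℝ} (hA : A.PosSemidef) :
    0 ≤ lambdaMax A ∧ lambdaMax A ≤ A.trace := by
  haveI : Nonempty (Fin n) := ⟨⟨0, hn⟩⟩
  rw [lambdaMax, dif_pos hA.isHermitian]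
  constructor
  · exact le_ciSup_of_le (Set.Finite.bddAbove (Set.finite_range _)) ⟨0, hn⟩
      (hA.eigenvalues_nonneg _)
  · refine ciSup_le fun i => ?_
    rw [myTraceEq A hA.isHermitian]
    exact Finset.single_le_sum (fun j _ => hA.eigenvalues_nonneg j) (Finset.mem_univ i)

/-- The key deterministic inequality. -/
lemma myKey {N : ℕ} (hN : 0 < N) {p ρ c : ℝ}
    (hp2' : 0 < p / 2) (hp21 : p / 2 ≤ 1) (hρ0 : 0 < ρ) (hρ1 : ρ < 1) (hc : 0 < c)
    (e : ℕ → Fin N → ℝ) (w : ℕ → Fin N → ℝ) (T : ℕ)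
    (hw : ∀ t k, |w t k| ≤ ∑ m ∈ Finset.range t, c * ρ ^ m * ∑ j, |e (t - m) j|) :
    (lambdaMax (∑ t ∈ Finset.Icc 1 T, vecMulVec (w t) (w t))) ^ (p / 2) ≤
      (c ^ 2 * (1 - ρ)⁻¹) ^ (p / 2) * (N : ℝ) ^ (p / 2) * N *
        ∑ t ∈ Finset.Icc 1 T, ∑ m ∈ Finset.range t,
          (ρ ^ (p / 2)) ^ m * ∑ j, |e (t - m) j| ^ p := by
  classical
  have hp0 : 0 < p := by linarith
  set r : ℝ := ρ ^ (p / 2) with hr_def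
  set D : ℝ := (c ^ 2 * (1 - ρ)⁻¹) ^ (p / 2) with hD_def
  have h1ρ : (0:ℝ) < 1 - ρ := by linarith
  have hD0 : 0 < D := Real.rpow_pos_of_pos (by positivity) _
  have hxp : ∀ x : ℝ, (x ^ 2) ^ (p / 2) = |x| ^ p := by
    intro x
    rw [← sq_abs, ← Real.rpow_natCast |x| 2, ← Real.rpow_mul (abs_nonneg x)]
    congr 1
    push_cast
    ring
  have hpowr : ∀ m : ℕ, (ρ ^ m) ^ (p / 2) = r ^ m := by
    intro m
    rw [← Real.rpow_natCast ρ m, ← Real.rpow_mul hρ0.le, mul_comm,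
      Real.rpow_mul hρ0.le, Real.rpow_natCast]
  have hgeom : ∀ t : ℕ, ∑ m ∈ Finset.range t, ρ ^ m ≤ (1 - ρ)⁻¹ := fun t =>
    sum_le_hasSum _ (fun m _ => by positivity) (hasSum_geometric_of_lt_one hρ0.le hρ1)
  -- positivity / trace bounds
  have hPSD : (∑ t ∈ Finset.Icc 1 T, vecMulVec (w t) (w t)).PosSemidef :=
    Finset.sum_induction _ _ (fun a b ha hb => ha.add hb) Matrix.PosSemidef.zero
      (fun t _ => myVecMulVecPSD _)
  obtain ⟨hL0, hLtr⟩ := myLambdaBounds hN hPSD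
  have htr : (∑ t ∈ Finset.Icc 1 T, vecMulVec (w t) (w t)).trace
      = ∑ t ∈ Finset.Icc 1 T, ∑ k, (w t k) ^ 2 := by
    rw [Matrix.trace_sum]
    refine Finset.sum_congr rfl fun t _ => ?_
    simp [Matrix.trace, Matrix.diag, Matrix.vecMulVec_apply, sq]
  rw [htr] at hLtr
  have htr0 : 0 ≤ ∑ t ∈ Finset.Icc 1 T, ∑ k, (w t k) ^ 2 :=
    Finset.sum_nonneg fun t _ => Finset.sum_nonneg fun k _ => sq_nonneg _
  have step12 : (lambdaMax (∑ t ∈ Finset.Icc 1 T, vecMulVec (w t) (w t))) ^ (p / 2)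
      ≤ ∑ t ∈ Finset.Icc 1 T, ∑ k, ((w t k) ^ 2) ^ (p / 2) := by
    calc (lambdaMax (∑ t ∈ Finset.Icc 1 T, vecMulVec (w t) (w t))) ^ (p / 2)
        ≤ (∑ t ∈ Finset.Icc 1 T, ∑ k, (w t k) ^ 2) ^ (p / 2) :=
          Real.rpow_le_rpow hL0 hLtr hp2'.le
      _ ≤ ∑ t ∈ Finset.Icc 1 T, (∑ k, (w t k) ^ 2) ^ (p / 2) :=
          myRpowSumLe _ _ (fun t _ => Finset.sum_nonneg fun k _ => sq_nonneg _) hp2' hp21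
      _ ≤ ∑ t ∈ Finset.Icc 1 T, ∑ k, ((w t k) ^ 2) ^ (p / 2) :=
          Finset.sum_le_sum fun t _ =>
            myRpowSumLe _ _ (fun k _ => sq_nonneg _) hp2' hp21
  have step3 : ∀ t : ℕ, ∀ k : Fin N, ((w t k) ^ 2) ^ (p / 2)
      ≤ D * (N : ℝ) ^ (p / 2) *
          ∑ m ∈ Finset.range t, r ^ m * ∑ j, |e (t - m) j| ^ p := by
    intro t k
    set y : ℕ → ℝ := fun m => ∑ j, |e (t - m) j| with hy_def
    have hy0 : ∀ m, 0 ≤ y m := fun m => Finset.sum_nonneg fun j _ => abs_nonneg _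
    have h1 : |w t k| ≤ c * ∑ m ∈ Finset.range t, ρ ^ m * y m := by
      rw [Finset.mul_sum]
      refine (hw t k).trans_eq (Finset.sum_congr rfl fun m _ => by ring)
    have h2 : (w t k) ^ 2 ≤ c ^ 2 * (∑ m ∈ Finset.range t, ρ ^ m * y m) ^ 2 := by
      rw [← sq_abs (w t k), ← mul_pow]
      exact pow_le_pow_left₀ (abs_nonneg _) h1 2
    have h4 : (∑ m ∈ Finset.range t, ρ ^ m * y m) ^ 2
        ≤ (∑ m ∈ Finset.range t, ρ ^ m) * ∑ m ∈ Finset.range t, ρ ^ m * (y m) ^ 2 := by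
      have hcs := Finset.sum_mul_sq_le_sq_mul_sq (Finset.range t)
        (fun m => Real.sqrt (ρ ^ m)) (fun m => Real.sqrt (ρ ^ m) * y m)
      calc (∑ m ∈ Finset.range t, ρ ^ m * y m) ^ 2
          = (∑ m ∈ Finset.range t, Real.sqrt (ρ ^ m) * (Real.sqrt (ρ ^ m) * y m)) ^ 2 := by
            congr 1
            refine Finset.sum_congr rfl fun m _ => ?_
            rw [← mul_assoc, Real.mul_self_sqrt (pow_nonneg hρ0.le m)]
        _ ≤ (∑ m ∈ Finset.range t, Real.sqrt (ρ ^ m) ^ 2) *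
              ∑ m ∈ Finset.range t, (Real.sqrt (ρ ^ m) * y m) ^ 2 := hcs
        _ = (∑ m ∈ Finset.range t, ρ ^ m) *
              ∑ m ∈ Finset.range t, ρ ^ m * (y m) ^ 2 := by
            congr 1
            · exact Finset.sum_congr rfl fun m _ => Real.sq_sqrt (pow_nonneg hρ0.le m)
            · refine Finset.sum_congr rfl fun m _ => ?_
              rw [mul_pow, Real.sq_sqrt (pow_nonneg hρ0.le m)]
    have hSnn : 0 ≤ ∑ m ∈ Finset.range t, ρ ^ m * (y m) ^ 2 :=
      Finset.sum_nonneg fun m _ => mul_nonneg (by positivity) (sq_nonneg _)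
    have h5 : (w t k) ^ 2 ≤ c ^ 2 * (1 - ρ)⁻¹ * ∑ m ∈ Finset.range t, ρ ^ m * (y m) ^ 2 := by
      calc (w t k) ^ 2 ≤ c ^ 2 * (∑ m ∈ Finset.range t, ρ ^ m * y m) ^ 2 := h2
        _ ≤ c ^ 2 * ((∑ m ∈ Finset.range t, ρ ^ m) *
              ∑ m ∈ Finset.range t, ρ ^ m * (y m) ^ 2) := by
            exact mul_le_mul_of_nonneg_left h4 (sq_nonneg c)
        _ ≤ c ^ 2 * ((1 - ρ)⁻¹ * ∑ m ∈ Finset.range t, ρ ^ m * (y m) ^ 2) := by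
            refine mul_le_mul_of_nonneg_left ?_ (sq_nonneg c)
            exact mul_le_mul_of_nonneg_right (hgeom t) hSnn
        _ = c ^ 2 * (1 - ρ)⁻¹ * ∑ m ∈ Finset.range t, ρ ^ m * (y m) ^ 2 := by ring
    have hyN : ∀ m : ℕ, ((y m) ^ 2) ^ (p / 2) ≤ (N : ℝ) ^ (p / 2) * ∑ j, |e (t - m) j| ^ p := by
      intro m
      have hcs2 := Finset.sum_mul_sq_le_sq_mul_sq (Finset.univ : Finset (Fin N))
        (fun _ => (1 : ℝ)) (fun j => |e (t - m) j|)
      have hcs2' : (y m) ^ 2 ≤ (N : ℝ) * ∑ j, (e (t - m) j) ^ 2 := by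
        have h := hcs2
        simp only [one_mul, one_pow, Finset.sum_const, Finset.card_univ, Fintype.card_fin,
          nsmul_eq_mul, mul_one, sq_abs] at h
        exact h
      calc ((y m) ^ 2) ^ (p / 2)
          ≤ ((N : ℝ) * ∑ j, (e (t - m) j) ^ 2) ^ (p / 2) :=
            Real.rpow_le_rpow (sq_nonneg _) hcs2' hp2'.le
        _ = (N : ℝ) ^ (p / 2) * (∑ j, (e (t - m) j) ^ 2) ^ (p / 2) :=
            Real.mul_rpow (Nat.cast_nonneg N)
              (Finset.sum_nonneg fun j _ => sq_nonneg _)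
        _ ≤ (N : ℝ) ^ (p / 2) * ∑ j, ((e (t - m) j) ^ 2) ^ (p / 2) := by
            refine mul_le_mul_of_nonneg_left ?_ (by positivity)
            exact myRpowSumLe _ _ (fun j _ => sq_nonneg _) hp2' hp21
        _ = (N : ℝ) ^ (p / 2) * ∑ j, |e (t - m) j| ^ p := by
            rw [Finset.sum_congr rfl fun j _ => hxp (e (t - m) j)]
    calc ((w t k) ^ 2) ^ (p / 2)
        ≤ (c ^ 2 * (1 - ρ)⁻¹ * ∑ m ∈ Finset.range t, ρ ^ m * (y m) ^ 2) ^ (p / 2) :=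
          Real.rpow_le_rpow (sq_nonneg _) h5 hp2'.le
      _ = D * (∑ m ∈ Finset.range t, ρ ^ m * (y m) ^ 2) ^ (p / 2) :=
          Real.mul_rpow (by positivity) hSnn
      _ ≤ D * ∑ m ∈ Finset.range t, (ρ ^ m * (y m) ^ 2) ^ (p / 2) := by
          refine mul_le_mul_of_nonneg_left ?_ hD0.le
          exact myRpowSumLe _ _
            (fun m _ => mul_nonneg (by positivity) (sq_nonneg _)) hp2' hp21
      _ = D * ∑ m ∈ Finset.range t, r ^ m * ((y m) ^ 2) ^ (p / 2) := by
          congr 1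
          refine Finset.sum_congr rfl fun m _ => ?_
          rw [Real.mul_rpow (by positivity) (sq_nonneg _), hpowr m]
      _ ≤ D * ∑ m ∈ Finset.range t, r ^ m * ((N : ℝ) ^ (p / 2) * ∑ j, |e (t - m) j| ^ p) := by
          refine mul_le_mul_of_nonneg_left (Finset.sum_le_sum fun m _ => ?_) hD0.le
          exact mul_le_mul_of_nonneg_left (hyN m) (by positivity)
      _ = D * (N : ℝ) ^ (p / 2) * ∑ m ∈ Finset.range t, r ^ m * ∑ j, |e (t - m) j| ^ p := by
          rw [Finset.mul_sum, Finset.mul_sum]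
          exact Finset.sum_congr rfl fun m _ => by ring
  calc (lambdaMax (∑ t ∈ Finset.Icc 1 T, vecMulVec (w t) (w t))) ^ (p / 2)
      ≤ ∑ t ∈ Finset.Icc 1 T, ∑ k : Fin N, ((w t k) ^ 2) ^ (p / 2) := step12
    _ ≤ ∑ t ∈ Finset.Icc 1 T, ∑ _k : Fin N,
          (D * (N : ℝ) ^ (p / 2) * ∑ m ∈ Finset.range t, r ^ m * ∑ j, |e (t - m) j| ^ p) :=
        Finset.sum_le_sum fun t _ => Finset.sum_le_sum fun k _ => step3 t k
    _ = D * (N : ℝ) ^ (p / 2) * N *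
          ∑ t ∈ Finset.Icc 1 T, ∑ m ∈ Finset.range t, r ^ m * ∑ j, |e (t - m) j| ^ p := by
        simp only [Finset.sum_const, Finset.card_univ, Fintype.card_fin, nsmul_eq_mul]
        rw [Finset.mul_sum]
        refine Finset.sum_congr rfl fun t _ => by ring

end Aux

/-- Let `0 < p ≤ 2`, `0 < ρ < 1`, `c > 0`, `K > 0`, `N ≥ 1`.  There is a constant `c₀ > 0`
depending only on `N, p, ρ, c, K` such that: for any probability space and any i.i.d. random
vectors `(ε_t)_{t ≥ 1}` in `ℝ^N` with `E|ε_{k,1}|^p ≤ K` for every coordinate `k`, and any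
`N × N` matrices `(C*_m)_{m ≥ 0}` with entries bounded by `c ρ^m`, setting
`u_t = ∑_{m=0}^{t−1} C*_m ε_{t−m}`, one has
`E[(λ_max(∑_{t=1}^T u_t u_tᵀ))^{p/2}] ≤ c₀ T` for every `T ≥ 1`. -/
theorem lambdaMax_moment_bound (p ρ c K : ℝ) (N : ℕ)
    (hp0 : 0 < p) (hp2 : p ≤ 2) (hρ0 : 0 < ρ) (hρ1 : ρ < 1) (hc : 0 < c) (hK : 0 < K)
    (hN : 1 ≤ N) :
    ∃ c₀ : ℝ, 0 < c₀ ∧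
      ∀ (Ω : Type) [MeasurableSpace Ω] (P : Measure Ω), IsProbabilityMeasure P →
        ∀ ε : ℕ → Ω → Fin N → ℝ,
          (∀ t, Measurable (ε t)) →
          iIndepFun (fun n => ε (n + 1)) P →
          (∀ s t : ℕ, IdentDistrib (ε (s + 1)) (ε (t + 1)) P P) →
          (∀ k : Fin N, ∫⁻ ω, ENNReal.ofReal (|ε 1 ω k| ^ p) ∂P ≤ ENNReal.ofReal K) →
          ∀ Cs : ℕ → Matrix (Fin N) (Fin N) ℝ,
            (∀ m i j, |Cs m i j| ≤ c * ρ ^ m) →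
            ∀ T : ℕ, 1 ≤ T →
              ∫⁻ ω, ENNReal.ofReal
                  ((lambdaMax (∑ t ∈ Finset.Icc 1 T,
                      vecMulVec (∑ m ∈ Finset.range t, (Cs m).mulVec (ε (t - m) ω))
                        (∑ m ∈ Finset.range t, (Cs m).mulVec (ε (t - m) ω)))) ^ (p / 2)) ∂P ≤
                ENNReal.ofReal (c₀ * T) := by
  have hp2' : 0 < p / 2 := by positivity
  have hp21 : p / 2 ≤ 1 := by linarith
  have hNpos : 0 < N := hN
  have hN0 : (0:ℝ) < N := by exact_mod_cast hNpos
  set r : ℝ := ρ ^ (p / 2) with hr_def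
  have hr0 : 0 < r := Real.rpow_pos_of_pos hρ0 _
  have hr1 : r < 1 := Real.rpow_lt_one hρ0.le hρ1 hp2'
  have h1r : (0:ℝ) < 1 - r := by linarith
  have h1ρ : (0:ℝ) < 1 - ρ := by linarith
  set D : ℝ := (c ^ 2 * (1 - ρ)⁻¹) ^ (p / 2) with hD_def
  have hD0 : 0 < D := Real.rpow_pos_of_pos (by positivity) _
  set A1 : ℝ := D * (N : ℝ) ^ (p / 2) * N with hA1_def
  have hA1pos : 0 < A1 := by
    have : (0:ℝ) < (N : ℝ) ^ (p / 2) := Real.rpow_pos_of_pos hN0 _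
    positivity
  refine ⟨A1 * (1 - r)⁻¹ * N * K, by positivity, ?_⟩
  intro Ω _ P hP ε hmeas hindep hid hmom Cs hCs T hT
  have habs_cont : Continuous fun x : ℝ => |x| ^ p :=
    continuous_abs.rpow_const fun x => Or.inr hp0.le
  have hgeomr : ∀ t : ℕ, ∑ m ∈ Finset.range t, r ^ m ≤ (1 - r)⁻¹ := fun t =>
    sum_le_hasSum _ (fun m _ => by positivity) (hasSum_geometric_of_lt_one hr0.le hr1)
  -- measurability of the moment functions
  have hjmeas : ∀ (s : ℕ) (j : Fin N), Measurable fun ω => ENNReal.ofReal (|ε s ω j| ^ p) := by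
    intro s j
    exact (habs_cont.measurable.comp ((measurable_pi_apply j).comp (hmeas s))).ennreal_ofReal
  have hFmeas : ∀ s : ℕ, Measurable fun ω => ENNReal.ofReal (∑ j, |ε s ω j| ^ p) := by
    intro s
    apply Measurable.ennreal_ofReal
    apply Finset.measurable_sum
    intro j _
    exact habs_cont.measurable.comp ((measurable_pi_apply j).comp (hmeas s))
  -- moment bound for every time s ≥ 1
  have hFbound : ∀ s : ℕ, 1 ≤ s →
      ∫⁻ ω, ENNReal.ofReal (∑ j, |ε s ω j| ^ p) ∂P ≤ (N : ℝ≥0∞) * ENNReal.ofReal K := by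
    intro s hs
    have hids : IdentDistrib (ε s) (ε 1) P P := by
      have h := hid (s - 1) 0
      rwa [Nat.sub_add_cancel hs] at h
    have hjj : ∀ j : Fin N, ∫⁻ ω, ENNReal.ofReal (|ε s ω j| ^ p) ∂P
        = ∫⁻ ω, ENNReal.ofReal (|ε 1 ω j| ^ p) ∂P := by
      intro j
      have hg : Measurable fun x : Fin N → ℝ => ENNReal.ofReal (|x j| ^ p) :=
        (habs_cont.measurable.comp (measurable_pi_apply j)).ennreal_ofReal
      calc ∫⁻ ω, ENNReal.ofReal (|ε s ω j| ^ p) ∂P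
          = ∫⁻ x, ENNReal.ofReal (|x j| ^ p) ∂(P.map (ε s)) :=
            (lintegral_map hg (hmeas s)).symm
        _ = ∫⁻ x, ENNReal.ofReal (|x j| ^ p) ∂(P.map (ε 1)) := by rw [hids.map_eq]
        _ = ∫⁻ ω, ENNReal.ofReal (|ε 1 ω j| ^ p) ∂P := lintegral_map hg (hmeas 1)
    calc ∫⁻ ω, ENNReal.ofReal (∑ j, |ε s ω j| ^ p) ∂P
        = ∫⁻ ω, ∑ j, ENNReal.ofReal (|ε s ω j| ^ p) ∂P := by
          refine lintegral_congr fun ω => ?_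
          exact ENNReal.ofReal_sum_of_nonneg fun j _ => by positivity
      _ = ∑ j, ∫⁻ ω, ENNReal.ofReal (|ε s ω j| ^ p) ∂P :=
          lintegral_finset_sum _ fun j _ => hjmeas s j
      _ = ∑ j, ∫⁻ ω, ENNReal.ofReal (|ε 1 ω j| ^ p) ∂P :=
          Finset.sum_congr rfl fun j _ => hjj j
      _ ≤ ∑ _j : Fin N, ENNReal.ofReal K := Finset.sum_le_sum fun j _ => hmom j
      _ = (N : ℝ≥0∞) * ENNReal.ofReal K := by
          simp [Finset.sum_const, Finset.card_univ, nsmul_eq_mul]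
  -- the pointwise (deterministic) bound
  have key : ∀ ω : Ω,
      (lambdaMax (∑ t ∈ Finset.Icc 1 T,
          vecMulVec (∑ m ∈ Finset.range t, (Cs m).mulVec (ε (t - m) ω))
            (∑ m ∈ Finset.range t, (Cs m).mulVec (ε (t - m) ω)))) ^ (p / 2)
      ≤ A1 * ∑ t ∈ Finset.Icc 1 T, ∑ m ∈ Finset.range t,
            r ^ m * ∑ j, |ε (t - m) ω j| ^ p := by
    intro ω
    have hw : ∀ t k,
        |(∑ m ∈ Finset.range t, (Cs m).mulVec (ε (t - m) ω)) k|
          ≤ ∑ m ∈ Finset.range t, c * ρ ^ m * ∑ j, |ε (t - m) ω j| := by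
      intro t k
      calc |(∑ m ∈ Finset.range t, (Cs m).mulVec (ε (t - m) ω)) k|
          = |∑ m ∈ Finset.range t, ∑ j, Cs m k j * ε (t - m) ω j| := by
            simp [Matrix.mulVec, dotProduct]
        _ ≤ ∑ m ∈ Finset.range t, |∑ j, Cs m k j * ε (t - m) ω j| :=
            Finset.abs_sum_le_sum_abs _ _
        _ ≤ ∑ m ∈ Finset.range t, ∑ j, |Cs m k j * ε (t - m) ω j| :=
            Finset.sum_le_sum fun m _ => Finset.abs_sum_le_sum_abs _ _
        _ ≤ ∑ m ∈ Finset.range t, ∑ j, (c * ρ ^ m) * |ε (t - m) ω j| := by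
            refine Finset.sum_le_sum fun m _ => Finset.sum_le_sum fun j _ => ?_
            rw [abs_mul]
            exact mul_le_mul_of_nonneg_right (hCs m k j) (abs_nonneg _)
        _ = ∑ m ∈ Finset.range t, c * ρ ^ m * ∑ j, |ε (t - m) ω j| := by
            refine Finset.sum_congr rfl fun m _ => ?_
            rw [Finset.mul_sum]
    exact myKey hNpos hp2' hp21 hρ0 hρ1 hc (fun s => ε s ω)
      (fun t => ∑ m ∈ Finset.range t, (Cs m).mulVec (ε (t - m) ω)) T hw
  -- putting it all together
  calc ∫⁻ ω, ENNReal.ofReal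
          ((lambdaMax (∑ t ∈ Finset.Icc 1 T,
              vecMulVec (∑ m ∈ Finset.range t, (Cs m).mulVec (ε (t - m) ω))
                (∑ m ∈ Finset.range t, (Cs m).mulVec (ε (t - m) ω)))) ^ (p / 2)) ∂P
      ≤ ∫⁻ ω, ENNReal.ofReal (A1 * ∑ t ∈ Finset.Icc 1 T, ∑ m ∈ Finset.range t,
            r ^ m * ∑ j, |ε (t - m) ω j| ^ p) ∂P :=
        lintegral_mono fun ω => ENNReal.ofReal_le_ofReal (key ω)
    _ = ∫⁻ ω, ENNReal.ofReal A1 * ∑ t ∈ Finset.Icc 1 T, ∑ m ∈ Finset.range t,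
            ENNReal.ofReal (r ^ m) * ENNReal.ofReal (∑ j, |ε (t - m) ω j| ^ p) ∂P := by
        refine lintegral_congr fun ω => ?_
        rw [ENNReal.ofReal_mul hA1pos.le]
        congr 1
        rw [ENNReal.ofReal_sum_of_nonneg fun t _ => Finset.sum_nonneg fun m _ =>
          mul_nonneg (by positivity) (Finset.sum_nonneg fun j _ => by positivity)]
        refine Finset.sum_congr rfl fun t _ => ?_
        rw [ENNReal.ofReal_sum_of_nonneg fun m _ =>
          mul_nonneg (by positivity) (Finset.sum_nonneg fun j _ => by positivity)]
        refine Finset.sum_congr rfl fun m _ => ?_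
        rw [ENNReal.ofReal_mul (by positivity)]
    _ = ENNReal.ofReal A1 * ∑ t ∈ Finset.Icc 1 T, ∑ m ∈ Finset.range t,
            ENNReal.ofReal (r ^ m) * ∫⁻ ω, ENNReal.ofReal (∑ j, |ε (t - m) ω j| ^ p) ∂P := by
        rw [lintegral_const_mul' _ _ ENNReal.ofReal_ne_top]
        congr 1
        rw [lintegral_finset_sum _ fun t _ =>
          Finset.measurable_sum _ fun m _ => (hFmeas (t - m)).const_mul _]
        refine Finset.sum_congr rfl fun t _ => ?_
        rw [lintegral_finset_sum _ fun m _ => (hFmeas (t - m)).const_mul _]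
        refine Finset.sum_congr rfl fun m _ => ?_
        rw [lintegral_const_mul' _ _ ENNReal.ofReal_ne_top]
    _ ≤ ENNReal.ofReal A1 * ∑ t ∈ Finset.Icc 1 T, ∑ m ∈ Finset.range t,
            ENNReal.ofReal (r ^ m) * ((N : ℝ≥0∞) * ENNReal.ofReal K) := by
        gcongr with t ht m hm
        refine hFbound (t - m) ?_
        have ht1 : 1 ≤ t := (Finset.mem_Icc.mp ht).1
        have hmt : m < t := Finset.mem_range.mp hm
        omega
    _ = ENNReal.ofReal A1 * ((N : ℝ≥0∞) * ENNReal.ofReal K) *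
          ∑ t ∈ Finset.Icc 1 T, ∑ m ∈ Finset.range t, ENNReal.ofReal (r ^ m) := by
        simp only [← Finset.sum_mul]
        ring
    _ ≤ ENNReal.ofReal A1 * ((N : ℝ≥0∞) * ENNReal.ofReal K) *
          ∑ _t ∈ Finset.Icc 1 T, ENNReal.ofReal ((1 - r)⁻¹) := by
        gcongr with t ht
        rw [← ENNReal.ofReal_sum_of_nonneg fun m _ => by positivity]
        exact ENNReal.ofReal_le_ofReal (hgeomr t)
    _ = ENNReal.ofReal A1 * ((N : ℝ≥0∞) * ENNReal.ofReal K) *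
          ((T : ℝ≥0∞) * ENNReal.ofReal ((1 - r)⁻¹)) := by
        rw [Finset.sum_const, Nat.card_Icc, Nat.add_sub_cancel, nsmul_eq_mul]
    _ = ENNReal.ofReal (A1 * (1 - r)⁻¹ * ↑N * K * ↑T) := by
        rw [show A1 * (1 - r)⁻¹ * (N : ℝ) * K * (T : ℝ)
            = A1 * ((N : ℝ) * K * ((T : ℝ) * (1 - r)⁻¹)) by ring,
          ENNReal.ofReal_mul hA1pos.le,
          ENNReal.ofReal_mul (by positivity : (0:ℝ) ≤ (N : ℝ) * K),
          ENNReal.ofReal_mul (Nat.cast_nonneg N), ENNReal.ofReal_mul (Nat.cast_nonneg T),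
          ENNReal.ofReal_natCast, ENNReal.ofReal_natCast]
        ring
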